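/- Let n ≥ 1 be an integer and X a real-valued random variable with E[X^{2n}] < ∞, and let N be a standard Gaussian random variable independent of X. Set d_n := n(n+1)/2. Then there exists a real polynomial p of degree at most d_n such that det M_{√t·X + N, n} = p(t) for every t ≥ 0, and the coefficient of t^{d_n} in p equals det M_{X,n}; moreover det M_{X,n} ≠ 0 if and only if |supp(X)| > n. -/

import Mathlib

open MeasureTheory ProbabilityTheory Polynomial Finset

namespace DetHankelAux

lemma integrable_pow_gaussian (k : ℕ) :
    Integrable (fun x : ℝ => x ^ k) (gaussianReal 0 1) := by
  rw [gaussianReal_of_var_ne_zero 0 one_ne_zero]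
  rw [integrable_withDensity_iff (measurable_gaussianPDF 0 1)
    (ae_of_all _ fun x => ENNReal.ofReal_lt_top)]
  have hbase : Integrable (fun x : ℝ => x ^ k * Real.exp (-(2:ℝ)⁻¹ * x ^ 2)) := by
    have hs : (-1 : ℝ) < (k : ℝ) := lt_of_lt_of_le neg_one_lt_zero (Nat.cast_nonneg k)
    simpa [Real.rpow_natCast] using
      integrable_rpow_mul_exp_neg_mul_sq (show (0:ℝ) < 2⁻¹ by norm_num) hs
  have heq : (fun x : ℝ => x ^ k * (gaussianPDF 0 1 x).toReal)
      = fun x => (Real.sqrt (2 * Real.pi))⁻¹ * (x ^ k * Real.exp (-(2:ℝ)⁻¹ * x ^ 2)) := by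
    ext x
    rw [gaussianPDF, ENNReal.toReal_ofReal (gaussianPDFReal_nonneg _ _ _), gaussianPDFReal]
    push_cast
    rw [mul_one, mul_one, sub_zero]
    ring_nf
  rw [heq]
  exact hbase.const_mul _

noncomputable def gm (k : ℕ) : ℝ := ∫ x, x ^ k ∂(gaussianReal 0 1)

lemma gm_zero : gm 0 = 1 := by simp [gm]

lemma gm_odd {k : ℕ} (hk : k % 2 = 1) : gm k = 0 := by
  have hodd : Odd k := Nat.odd_iff.mpr hk
  have hmap : (gaussianReal 0 1).map (fun x => (-1 : ℝ) * x) = gaussianReal 0 1 := by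
    have h := gaussianReal_map_const_mul (μ := 0) (v := 1) (-1)
    rw [show (fun x : ℝ => (-1:ℝ) * x) = ((-1 : ℝ) * ·) from rfl, h]
    norm_num
  have h2 : gm k = ∫ x, ((-1 : ℝ) * x) ^ k ∂(gaussianReal 0 1) := by
    rw [gm]
    conv_lhs => rw [← hmap]
    rw [integral_map (by fun_prop) (by fun_prop)]
  have h3 : ∫ x, ((-1 : ℝ) * x) ^ k ∂(gaussianReal 0 1) = -gm k := by
    rw [gm, ← integral_neg]
    congr 1
    ext x
    rw [mul_pow, hodd.neg_one_pow]
    ring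
  have := h2.trans h3
  linarith

/-- coefficient of a polynomial given by a list of monomials -/
lemma coeff_msum (M : ℕ) (c : ℕ → ℝ) (k : ℕ) :
    (∑ k' ∈ Finset.range (M+1), Polynomial.monomial k' (c k')).coeff k
      = if k ≤ M then c k else 0 := by
  rw [Polynomial.finset_sum_coeff]
  simp_rw [Polynomial.coeff_monomial]
  rw [Finset.sum_ite_eq' (Finset.range (M+1)) k c]
  simp [Nat.lt_succ_iff]

lemma natDegree_msum_le (M : ℕ) (c : ℕ → ℝ) :
    (∑ k' ∈ Finset.range (M+1), Polynomial.monomial k' (c k')).natDegree ≤ M := by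
  rw [Polynomial.natDegree_le_iff_coeff_eq_zero]
  intro N hN
  rw [coeff_msum]
  simp [Nat.not_le.mpr hN, Nat.lt_irrefl]

lemma eval_msum (M : ℕ) (c : ℕ → ℝ) (s : ℝ) :
    (∑ k' ∈ Finset.range (M+1), Polynomial.monomial k' (c k')).eval s
      = ∑ k' ∈ Finset.range (M+1), c k' * s ^ k' := by
  rw [Polynomial.eval_finset_sum]
  simp [Polynomial.eval_monomial]

lemma coeff_prod_of_degree_le {ι : Type*} (s : Finset ι) (f : ι → Polynomial ℝ) (d : ι → ℕ)
    (h : ∀ i ∈ s, (f i).natDegree ≤ d i) :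
    (∏ i ∈ s, f i).coeff (∑ i ∈ s, d i) = ∏ i ∈ s, (f i).coeff (d i) := by
  induction s using Finset.cons_induction with
  | empty => simp
  | cons a s ha ih =>
    rw [Finset.prod_cons, Finset.sum_cons, Finset.prod_cons,
      Polynomial.coeff_mul_add_eq_of_natDegree_le (h a (Finset.mem_cons_self a s))
        (le_trans (Polynomial.natDegree_prod_le s f)
          (Finset.sum_le_sum fun i hi => h i (Finset.mem_cons_of_mem hi))),
      ih fun i hi => h i (Finset.mem_cons_of_mem hi)]

lemma coeff_prod_eq_zero_parity {ι : Type*} (s : Finset ι) (f : ι → Polynomial ℝ) (e : ι → ℕ)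
    (h : ∀ i ∈ s, ∀ k, (k + e i) % 2 = 1 → (f i).coeff k = 0) :
    ∀ k, (k + ∑ i ∈ s, e i) % 2 = 1 → (∏ i ∈ s, f i).coeff k = 0 := by
  induction s using Finset.cons_induction with
  | empty =>
    intro k hk
    simp only [Finset.sum_empty, Nat.add_zero] at hk
    rw [Finset.prod_empty, Polynomial.coeff_one]
    have : k ≠ 0 := by omega
    simp [this]
  | cons a s ha ih =>
    intro k hk
    rw [Finset.prod_cons, Polynomial.coeff_mul]
    refine Finset.sum_eq_zero ?_
    rintro ⟨x, y⟩ hxy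
    have hxyk : x + y = k := Finset.HasAntidiagonal.mem_antidiagonal.mp hxy
    rw [Finset.sum_cons] at hk
    by_cases hx : (x + e a) % 2 = 1
    · rw [h a (Finset.mem_cons_self a s) x hx, zero_mul]
    · have hy : (y + ∑ i ∈ s, e i) % 2 = 1 := by omega
      rw [ih (fun i hi => h i (Finset.mem_cons_of_mem hi)) y hy, mul_zero]

lemma sum_range_two_mul (N : ℕ) (f : ℕ → ℝ) :
    ∑ k ∈ Finset.range (2 * N), f k = ∑ m ∈ Finset.range N, (f (2 * m) + f (2 * m + 1)) := by
  induction N with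
  | zero => simp
  | succ N ih =>
    have h2 : 2 * (N + 1) = (2 * N + 1) + 1 := by ring
    rw [h2, Finset.sum_range_succ, Finset.sum_range_succ, ih, Finset.sum_range_succ]
    ring

end DetHankelAux

open MeasureTheory ProbabilityTheory

/-- The Hankel moment matrix `M_{Y,n} = (E[Y^{i+j}])_{0 ≤ i,j ≤ n}`. -/
noncomputable def hankelMoment {Ω : Type*} [MeasurableSpace Ω] (P : Measure Ω)
    (Y : Ω → ℝ) (n : ℕ) : Matrix (Fin (n + 1)) (Fin (n + 1)) ℝ :=
  Matrix.of fun i j => ∫ ω, Y ω ^ ((i : ℕ) + (j : ℕ)) ∂P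

open MeasureTheory ProbabilityTheory Polynomial Finset DetHankelAux

/-- For `n ≥ 1`, `E[X^{2n}] < ∞`, and `N` a standard Gaussian independent of
`X`: `t ↦ det M_{√t·X+N, n}` is a polynomial of degree at most `d_n = n(n+1)/2` on `t ≥ 0`,
its coefficient of `t^{d_n}` is `det M_{X,n}`, and `det M_{X,n} ≠ 0` iff `|supp(X)| > n`. -/
theorem det_hankel_gaussian_polynomial
    {Ω : Type*} [MeasurableSpace Ω] (P : Measure Ω) [IsProbabilityMeasure P]
    (X N : Ω → ℝ) (hXm : Measurable X) (hNm : Measurable N)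
    (n : ℕ) (hn : 1 ≤ n)
    (hX2n : Integrable (fun ω => X ω ^ (2 * n)) P)
    (hN : Measure.map N P = gaussianReal 0 1)
    (hindep : IndepFun X N P) :
    ∃ p : Polynomial ℝ,
      p.natDegree ≤ n * (n + 1) / 2 ∧
      (∀ t : ℝ, 0 ≤ t →
        (hankelMoment P (fun ω => Real.sqrt t * X ω + N ω) n).det = p.eval t) ∧
      p.coeff (n * (n + 1) / 2) = (hankelMoment P X n).det ∧
      ((hankelMoment P X n).det ≠ 0 ↔
        ∀ S : Finset ℝ, S.card ≤ n → P (X ⁻¹' (S : Set ℝ)) ≠ 1) := by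
  classical
  set d : ℕ := n * (n + 1) / 2 with hd
  have h2d : 2 * d = n * (n + 1) := by
    rw [hd]
    exact Nat.two_mul_div_two_of_even (Nat.even_mul_succ_self n)
  set m : ℕ → ℝ := fun k => ∫ ω, X ω ^ k ∂P with hm
  -- integrability of powers of X
  have hXint : ∀ k, k ≤ 2 * n → Integrable (fun ω => X ω ^ k) P := by
    intro k hk
    have hb : Integrable (fun ω => 1 + |X ω ^ (2 * n)|) P := (integrable_const 1).add hX2n.abs
    refine hb.mono' (hXm.pow_const k).aestronglyMeasurable (ae_of_all _ fun ω => ?_)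
    rw [Real.norm_eq_abs, abs_pow]
    rcases le_or_gt (|X ω|) 1 with h1 | h1
    · have h2 : |X ω| ^ k ≤ 1 := pow_le_one₀ (abs_nonneg _) h1
      have h0 : (0:ℝ) ≤ |X ω ^ (2 * n)| := abs_nonneg _
      linarith
    · have h2 : |X ω| ^ k ≤ |X ω| ^ (2 * n) := pow_le_pow_right₀ h1.le hk
      have h3 : |X ω ^ (2 * n)| = |X ω| ^ (2 * n) := abs_pow _ _
      linarith
  -- integrability / moments of powers of N
  have hNint : ∀ k, Integrable (fun ω => N ω ^ k) P := by
    intro k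
    have h1 : Integrable (fun x : ℝ => x ^ k) (Measure.map N P) := by
      rw [hN]; exact integrable_pow_gaussian k
    exact (integrable_map_measure (measurable_id.pow_const k).aestronglyMeasurable.aemeasurable.aestronglyMeasurable hNm.aemeasurable).mp h1
  have hNg : ∀ k, ∫ ω, N ω ^ k ∂P = gm k := by
    intro k
    have hsm : AEStronglyMeasurable (fun x : ℝ => x ^ k) (Measure.map N P) :=
      (measurable_id.pow_const k).aestronglyMeasurable
    rw [gm, ← hN]
    exact (integral_map hNm.aemeasurable hsm).symm
  -- products
  have hmul : ∀ a b : ℕ, a ≤ 2 * n →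
      Integrable (fun ω => X ω ^ a * N ω ^ b) P ∧
        ∫ ω, X ω ^ a * N ω ^ b ∂P = m a * gm b := by
    intro a b hab
    have hi : IndepFun (fun ω => X ω ^ a) (fun ω => N ω ^ b) P :=
      hindep.comp (measurable_id.pow_const a) (measurable_id.pow_const b)
    have hint : Integrable (fun ω => X ω ^ a * N ω ^ b) P :=
      hi.integrable_mul (hXint a hab) (hNint b)
    refine ⟨hint, ?_⟩
    have := hi.integral_fun_mul_eq_mul_integral (hXint a hab).aestronglyMeasurable (hNint b).aestronglyMeasurable
    rw [← hNg b]
    exact this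
  -- moment expansion
  have key : ∀ M : ℕ, M ≤ 2 * n → ∀ s : ℝ,
      ∫ ω, (s * X ω + N ω) ^ M ∂P
        = ∑ k ∈ Finset.range (M + 1), ((M.choose k : ℝ) * (m k * gm (M - k))) * s ^ k := by
    intro M hM s
    have hexp : ∀ ω, (s * X ω + N ω) ^ M
        = ∑ k ∈ Finset.range (M + 1),
            (s ^ k * (M.choose k : ℝ)) * (X ω ^ k * N ω ^ (M - k)) := by
      intro ω
      rw [add_pow]
      exact Finset.sum_congr rfl fun k _ => by rw [mul_pow]; ring
    simp only [hexp]
    rw [integral_finset_sum _ (fun k hk => ((hmul k (M - k)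
      (le_trans (Nat.lt_succ_iff.mp (Finset.mem_range.mp hk)) hM)).1).const_mul _)]
    refine Finset.sum_congr rfl fun k hk => ?_
    rw [integral_const_mul, (hmul k (M - k)
      (le_trans (Nat.lt_succ_iff.mp (Finset.mem_range.mp hk)) hM)).2]
    ring
  -- coefficients
  set a : ℕ → ℕ → ℝ := fun M k => (M.choose k : ℝ) * (m k * gm (M - k)) with haa
  set Q : Matrix (Fin (n+1)) (Fin (n+1)) (Polynomial ℝ) :=
    Matrix.of (fun i j => ∑ k ∈ Finset.range ((i:ℕ) + (j:ℕ) + 1),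
      Polynomial.monomial k (a ((i:ℕ) + (j:ℕ)) k)) with hQ
  have hijle : ∀ i j : Fin (n+1), (i:ℕ) + (j:ℕ) ≤ 2 * n := fun i j => by
    have := i.is_le; have := j.is_le; omega
  have hQdeg : ∀ i j : Fin (n+1), (Q i j).natDegree ≤ (i:ℕ) + (j:ℕ) :=
    fun i j => natDegree_msum_le _ _
  have hQtop : ∀ i j : Fin (n+1), (Q i j).coeff ((i:ℕ) + (j:ℕ)) = m ((i:ℕ) + (j:ℕ)) := by
    intro i j
    rw [hQ, Matrix.of_apply, coeff_msum, if_pos le_rfl]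
    simp only [haa]
    simp [Nat.choose_self, gm_zero]
  have hQparity : ∀ i j : Fin (n+1), ∀ k, (k + ((i:ℕ) + (j:ℕ))) % 2 = 1 →
      (Q i j).coeff k = 0 := by
    intro i j k hk
    rw [hQ, Matrix.of_apply, coeff_msum]
    by_cases hkM : k ≤ (i:ℕ) + (j:ℕ)
    · rw [if_pos hkM]
      simp only [haa]
      have h5 : ((i:ℕ) + (j:ℕ) - k) % 2 = 1 := by omega
      rw [gm_odd h5]
      ring
    · rw [if_neg hkM]
  set D : Polynomial ℝ := Q.det with hD
  have hsumfin : ∑ i : Fin (n+1), (i:ℕ) = d := by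
    rw [Fin.sum_univ_eq_sum_range (fun i => i)]
    have e1 : (∑ i ∈ Finset.range (n + 1), i) * 2 = (n + 1) * n := by
      simpa using Finset.sum_range_id_mul_two (n + 1)
    have e2 : (∑ i ∈ Finset.range (n + 1), i) * 2 = d * 2 := by
      rw [e1, mul_comm d 2, h2d, mul_comm (n+1) n]
    exact Nat.eq_of_mul_eq_mul_right two_pos e2
  have hDdeg : D.natDegree ≤ 2 * d := by
    rw [hD, Matrix.det_apply']
    refine natDegree_sum_le_of_forall_le _ _ fun σ _ => ?_
    refine le_trans (Polynomial.natDegree_mul_le) ?_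
    rw [← Polynomial.C_eq_intCast, Polynomial.natDegree_C, zero_add]
    refine le_trans (Polynomial.natDegree_prod_le _ _) ?_
    calc ∑ i : Fin (n+1), (Q (σ i) i).natDegree
        ≤ ∑ i : Fin (n+1), (((σ i : ℕ)) + (i:ℕ)) :=
          Finset.sum_le_sum fun i _ => hQdeg (σ i) i
      _ = 2 * d := by
          rw [Finset.sum_add_distrib, Equiv.sum_comp σ (fun i : Fin (n+1) => (i:ℕ)), hsumfin]
          ring
  have hHX : ∀ i j : Fin (n+1), hankelMoment P X n i j = m ((i:ℕ) + (j:ℕ)) := fun i j => rfl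
  have hDtop : D.coeff (2 * d) = (hankelMoment P X n).det := by
    rw [hD, Matrix.det_apply', Matrix.det_apply', Polynomial.finset_sum_coeff]
    refine Finset.sum_congr rfl fun σ _ => ?_
    rw [← Polynomial.C_eq_intCast, Polynomial.coeff_C_mul]
    congr 1
    have hsum : ∑ i : Fin (n+1), (((σ i : ℕ)) + (i:ℕ)) = 2 * d := by
      rw [Finset.sum_add_distrib, Equiv.sum_comp σ (fun i : Fin (n+1) => (i:ℕ)), hsumfin]; ring
    rw [← hsum, coeff_prod_of_degree_le _ _ _ (fun i _ => hQdeg (σ i) i)]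
    exact Finset.prod_congr rfl fun i _ => (hQtop (σ i) i).trans (hHX (σ i) i).symm
  have hDparity : ∀ k, k % 2 = 1 → D.coeff k = 0 := by
    intro k hk
    rw [hD, Matrix.det_apply', Polynomial.finset_sum_coeff]
    refine Finset.sum_eq_zero fun σ _ => ?_
    rw [← Polynomial.C_eq_intCast, Polynomial.coeff_C_mul]
    have hsum : ∑ i : Fin (n+1), (((σ i : ℕ)) + (i:ℕ)) = 2 * d := by
      rw [Finset.sum_add_distrib, Equiv.sum_comp σ (fun i : Fin (n+1) => (i:ℕ)), hsumfin]; ring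
    have hpar : (k + ∑ i : Fin (n+1), (((σ i : ℕ)) + (i:ℕ))) % 2 = 1 := by
      rw [hsum]; omega
    rw [coeff_prod_eq_zero_parity Finset.univ (fun i => Q (σ i) i)
      (fun i => ((σ i : ℕ)) + (i:ℕ)) (fun i _ => hQparity (σ i) i) k hpar, mul_zero]
  -- the polynomial
  set p : Polynomial ℝ := ∑ k ∈ Finset.range (d + 1),
    Polynomial.monomial k (D.coeff (2 * k)) with hp
  refine ⟨p, natDegree_msum_le _ _, ?_, ?_, ?_⟩
  · -- evaluation
    intro t ht
    set s : ℝ := Real.sqrt t with hs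
    have hs2 : s ^ 2 = t := Real.sq_sqrt ht
    have hmap : hankelMoment P (fun ω => s * X ω + N ω) n
        = Q.map (Polynomial.evalRingHom s) := by
      ext i j
      rw [Matrix.map_apply, hQ, Matrix.of_apply, Polynomial.coe_evalRingHom, eval_msum]
      exact key ((i:ℕ) + (j:ℕ)) (hijle i j) s
    rw [hmap, show Q.map (Polynomial.evalRingHom s) = (Polynomial.evalRingHom s).mapMatrix Q
      from rfl, ← RingHom.map_det, Polynomial.coe_evalRingHom, ← hD]
    -- D.eval s = p.eval t
    have hev : D.eval s = ∑ k ∈ Finset.range (2 * (d + 1)), D.coeff k * s ^ k := by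
      rw [Polynomial.eval_eq_sum_range' (n := 2 * (d + 1))
        (lt_of_le_of_lt hDdeg (by omega)) s]
    rw [hev, sum_range_two_mul, hp, eval_msum]
    refine Finset.sum_congr rfl fun k _ => ?_
    rw [hDparity (2 * k + 1) (by omega), zero_mul, add_zero, pow_mul, hs2]
  · -- top coefficient
    rw [hp, coeff_msum, if_pos le_rfl, hDtop]
  · -- nondegeneracy
    constructor
    · -- det ≠ 0 → no small support
      intro hdet S hS hPS
      apply hdet
      set q : Polynomial ℝ := ∏ x ∈ S, (Polynomial.X - Polynomial.C x) with hq
      have hqm : q.Monic := monic_prod_of_monic _ _ fun x _ => monic_X_sub_C x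
      have hqd : q.natDegree = S.card := by
        rw [hq, Polynomial.natDegree_prod _ _ (fun x _ => (monic_X_sub_C x).ne_zero)]
        simp [Polynomial.natDegree_X_sub_C]
      set v : Fin (n+1) → ℝ := fun j => q.coeff (j:ℕ) with hv
      have hvne : v ≠ 0 := by
        intro h0
        have h1 : v ⟨S.card, by omega⟩ = 1 := by
          rw [hv]
          simpa [hqd] using hqm.coeff_natDegree
        rw [h0] at h1
        simp at h1
      have hqe : ∀ x : ℝ, q.eval x = ∑ j : Fin (n+1), q.coeff (j:ℕ) * x ^ (j:ℕ) := by
        intro x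
        rw [Polynomial.eval_eq_sum_range' (show q.natDegree < n + 1 by omega) x,
          ← Fin.sum_univ_eq_sum_range]
      have hae : ∀ᵐ ω ∂P, X ω ∈ (S : Set ℝ) := by
        have hc : P (X ⁻¹' (S : Set ℝ))ᶜ = 0 :=
          (prob_compl_eq_zero_iff (hXm (S.finite_toSet.measurableSet))).mpr hPS
        exact ae_iff.mpr hc
      have hMv : (hankelMoment P X n).mulVec v = 0 := by
        funext i
        rw [Matrix.mulVec, dotProduct]
        have h1 : ∀ j : Fin (n+1), hankelMoment P X n i j * v j
            = ∫ ω, X ω ^ ((i:ℕ) + (j:ℕ)) * v j ∂P := by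
          intro j
          rw [hHX, hm, ← integral_mul_const]
        simp only [h1]
        rw [← integral_finset_sum _ (fun j _ => (hXint _ (hijle i j)).mul_const _)]
        rw [Pi.zero_apply]
        have hz : ∫ ω, (∑ j : Fin (n+1), X ω ^ ((i:ℕ) + (j:ℕ)) * v j) ∂P
            = ∫ (_ : Ω), (0:ℝ) ∂P := by
          refine integral_congr_ae (hae.mono fun ω hω => ?_)
          have hq0 : q.eval (X ω) = 0 := by
            rw [hq, Polynomial.eval_prod]
            exact Finset.prod_eq_zero hω (by simp)
          calc ∑ j : Fin (n+1), X ω ^ ((i:ℕ) + (j:ℕ)) * v j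
              = X ω ^ (i:ℕ) * ∑ j : Fin (n+1), q.coeff (j:ℕ) * X ω ^ (j:ℕ) := by
                rw [Finset.mul_sum]
                exact Finset.sum_congr rfl fun j _ => by rw [pow_add, hv]; ring
            _ = 0 := by rw [← hqe, hq0, mul_zero]
        simpa using hz
      exact (Matrix.exists_mulVec_eq_zero_iff).mp ⟨v, hvne, hMv⟩
    · -- no small support → det ≠ 0
      intro hsupp hdet
      obtain ⟨v, hvne, hMv⟩ := (Matrix.exists_mulVec_eq_zero_iff).mpr hdet
      set q : Polynomial ℝ := ∑ j : Fin (n+1), Polynomial.monomial (j:ℕ) (v j) with hq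
      obtain ⟨j₀, hj₀⟩ := Function.ne_iff.mp hvne
      have hqc : ∀ j : Fin (n+1), q.coeff (j:ℕ) = v j := by
        intro j
        rw [hq, Polynomial.finset_sum_coeff]
        rw [Finset.sum_eq_single j (fun b _ hb => by
          rw [Polynomial.coeff_monomial, if_neg (by simpa [Fin.val_eq_val] using hb)])
          (fun h => absurd (Finset.mem_univ j) h)]
        simp [Polynomial.coeff_monomial]
      have hqne : q ≠ 0 := fun h0 => hj₀ (by rw [← hqc j₀, h0]; simp)
      have hqdeg : q.natDegree ≤ n := by
        rw [hq]
        refine natDegree_sum_le_of_forall_le _ _ fun j _ => ?_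
        exact le_trans (Polynomial.natDegree_monomial_le _) j.is_le
      have hqe : ∀ x : ℝ, q.eval x = ∑ j : Fin (n+1), v j * x ^ (j:ℕ) := by
        intro x
        rw [hq, Polynomial.eval_finset_sum]
        simp [Polynomial.eval_monomial]
      set g : Ω → ℝ := fun ω => ∑ j : Fin (n+1), v j * X ω ^ (j:ℕ) with hg
      have hgsq : ∀ ω, g ω ^ 2
          = ∑ i : Fin (n+1), ∑ j : Fin (n+1), (v i * v j) * X ω ^ ((i:ℕ) + (j:ℕ)) := by
        intro ω
        rw [hg, sq, Finset.sum_mul_sum]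
        exact Finset.sum_congr rfl fun i _ => Finset.sum_congr rfl fun j _ => by
          rw [pow_add]; ring
      have hgint : Integrable (fun ω => g ω ^ 2) P := by
        simp only [hgsq]
        exact integrable_finset_sum _ fun i _ => integrable_finset_sum _ fun j _ =>
          ((hXint _ (hijle i j)).const_mul _)
      have hgz : ∫ ω, g ω ^ 2 ∂P = 0 := by
        simp only [hgsq]
        rw [integral_finset_sum _ fun i _ => integrable_finset_sum _ fun j _ =>
          ((hXint _ (hijle i j)).const_mul _)]
        have h2 : ∀ i : Fin (n+1),
            ∫ ω, ∑ j : Fin (n+1), (v i * v j) * X ω ^ ((i:ℕ) + (j:ℕ)) ∂P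
              = v i * ((hankelMoment P X n).mulVec v i) := by
          intro i
          rw [integral_finset_sum _ fun j _ => ((hXint _ (hijle i j)).const_mul _)]
          rw [Matrix.mulVec, dotProduct, Finset.mul_sum]
          refine Finset.sum_congr rfl fun j _ => ?_
          rw [integral_const_mul, hHX, hm]
          ring
        simp only [h2, hMv]
        simp
      have hae0 : ∀ᵐ ω ∂P, g ω = 0 := by
        have h3 := (integral_eq_zero_iff_of_nonneg (fun ω => sq_nonneg (g ω)) hgint).mp hgz
        exact h3.mono fun ω hω => by
          have : g ω ^ 2 = 0 := hω
          exact pow_eq_zero_iff (by norm_num) |>.mp this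
      set S : Finset ℝ := q.roots.toFinset with hS
      have hScard : S.card ≤ n := by
        refine le_trans (Multiset.toFinset_card_le _) (le_trans (Polynomial.card_roots' q) hqdeg)
      refine hsupp S hScard ?_
      have haeS : ∀ᵐ ω ∂P, X ω ∈ (S : Set ℝ) := by
        refine hae0.mono fun ω hω => ?_
        have : q.eval (X ω) = 0 := by rw [hqe]; exact hω
        simp only [hS, Finset.mem_coe]
        exact Multiset.mem_toFinset.mpr (Polynomial.mem_roots'.mpr ⟨hqne, this⟩)
      rw [← prob_compl_eq_zero_iff (hXm (S.finite_toSet.measurableSet))]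
      exact ae_iff.mp (by simpa using haeS)
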